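/- Let m ≥ 2, let λ = e^{πi/m} (a primitive 2m-th root of unity), and let i be a positive integer with gcd(i, 2m) = 1 (so i is odd). Let A = ℂ⟨u,v⟩/(u² − λ^i·v²). Let τ : A → A be the ℂ-algebra endomorphism determined by τ(u) = −u, τ(v) = −v. Let S₊, S₋ : A → A be any ℂ-linear maps satisfying, for all nonnegative integers p and all integers q ≥ 1: S₊(u^{2p}·(vu)^q) = λ^{−iq}·u^{2p+1}·(vu)^{q−1}·v, S₊(u^{2p+1}·(vu)^{q−1}·v) = λ^{iq}·u^{2p}·(vu)^q, S₊(u^{2p}) = u^{2p}, and S₋(u^{2p}·(vu)^q) = λ^{iq}·u^{2p+1}·(vu)^{q−1}·v, S₋(u^{2p+1}·(vu)^{q−1}·v) = λ^{−iq}·u^{2p}·(vu)^q, S₋(u^{2p}) = u^{2p}. Then the set { F ∈ A : τ(F) = F, S₊(F) = F, S₋(F) = F } equals the ℂ-subalgebra of A generated by u² and (uv)^m − (vu)^m. -/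

import Mathlib

/-! Theorem 4.5 of Ferraro–Kirkman–Moore–Won: the fixed ring of the inner-faithful
action of Masuoka's Hopf algebra `𝓑_{4m}` on `A⁻ = ℂ⟨u,v⟩/(u² - λ^i v²)` is
`ℂ[u², (uv)^m - (vu)^m]`. -/

noncomputable section

open FreeAlgebra

/-- The relation `u² = C • v²` on `ℂ⟨u,v⟩`, i.e. the quotient by the two-sided
ideal generated by `u² - C·v²`. -/
inductive Stmt15.Rel (C : ℂ) : FreeAlgebra ℂ (Fin 2) → FreeAlgebra ℂ (Fin 2) → Prop
  | main : Stmt15.Rel C (ι ℂ 0 * ι ℂ 0) (C • (ι ℂ 1 * ι ℂ 1))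

/-- `A = ℂ⟨u,v⟩/(u² - C·v²)`. -/
abbrev Stmt15.A (C : ℂ) := RingQuot (Stmt15.Rel C)

def Stmt15.u (C : ℂ) : Stmt15.A C := RingQuot.mkAlgHom ℂ (Stmt15.Rel C) (ι ℂ 0)
def Stmt15.v (C : ℂ) : Stmt15.A C := RingQuot.mkAlgHom ℂ (Stmt15.Rel C) (ι ℂ 1)

namespace Stmt15
variable (C : ℂ)

def zz : A C := u C * u C
def ww : A C := v C * u C
def tt : A C := u C * v C

lemma rel_uu : u C * u C = C • (v C * v C) := by
  have := RingQuot.mkAlgHom_rel ℂ (Rel.main (C := C))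
  simpa [u, v, map_mul, map_smul] using this

lemma rel_vv (hC : C ≠ 0) : v C * v C = C⁻¹ • (u C * u C) := by
  rw [rel_uu, smul_smul, inv_mul_cancel₀ hC, one_smul]

lemma adjoin_uv : Algebra.adjoin ℂ ({u C, v C} : Set (A C)) = ⊤ := by
  have hsurj : Function.Surjective (RingQuot.mkAlgHom ℂ (Rel C)) :=
    RingQuot.mkAlgHom_surjective ℂ (Rel C)
  have h1 : Algebra.adjoin ℂ (Set.range (ι ℂ : Fin 2 → FreeAlgebra ℂ (Fin 2))) = ⊤ :=
    FreeAlgebra.adjoin_range_ι ℂ (Fin 2)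
  have h2 := AlgHom.map_adjoin (RingQuot.mkAlgHom ℂ (Rel C))
      (Set.range (ι ℂ : Fin 2 → FreeAlgebra ℂ (Fin 2)))
  rw [h1] at h2
  have h3 : Subalgebra.map (RingQuot.mkAlgHom ℂ (Rel C)) ⊤ = ⊤ :=
    (Algebra.map_top _).trans ((AlgHom.range_eq_top _).mpr hsurj)
  have h4 : (RingQuot.mkAlgHom ℂ (Rel C)) '' (Set.range (ι ℂ : Fin 2 → FreeAlgebra ℂ (Fin 2)))
      = {u C, v C} := by
    ext x
    simp only [Set.mem_image, Set.mem_range, Set.mem_insert_iff, Set.mem_singleton_iff]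
    constructor
    · rintro ⟨y, ⟨j, rfl⟩, rfl⟩
      fin_cases j
      · left; rfl
      · right; rfl
    · rintro (rfl | rfl)
      · exact ⟨_, ⟨0, rfl⟩, rfl⟩
      · exact ⟨_, ⟨1, rfl⟩, rfl⟩
  rw [h3, h4] at h2
  exact h2.symm

lemma zz_comm (x : A C) : Commute (zz C) x := by
  have hu : Commute (zz C) (u C) := by
    unfold Commute SemiconjBy zz; rw [mul_assoc]
  have hv : Commute (zz C) (v C) := by
    unfold Commute SemiconjBy zz
    rw [rel_uu, smul_mul_assoc, mul_smul_comm, mul_assoc]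
  have : ({u C, v C} : Set (A C)) ⊆ (Subalgebra.centralizer ℂ {zz C} : Set (A C)) := by
    rintro x (rfl | rfl)
    · intro y hy; rw [Set.mem_singleton_iff] at hy; subst hy; exact hu.eq
    · intro y hy; rw [Set.mem_singleton_iff] at hy; subst hy; exact hv.eq
  have h := Algebra.adjoin_le this
  rw [adjoin_uv] at h
  have hx : x ∈ Subalgebra.centralizer ℂ {zz C} := h (by trivial)
  exact hx (zz C) rfl


lemma zz_commute_all (x : A C) : zz C * x = x * zz C := (zz_comm C x).eq

lemma u_mul_w : u C * ww C = tt C * u C := by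
  unfold ww tt; rw [← mul_assoc]

lemma u_mul_w_pow (q : ℕ) : u C * ww C ^ q = tt C ^ q * u C := by
  induction q with
  | zero => simp
  | succ n ih =>
    rw [pow_succ, ← mul_assoc, ih, pow_succ]
    rw [mul_assoc, mul_assoc, u_mul_w, ← mul_assoc]

lemma tw (hC : C ≠ 0) : tt C * ww C = C⁻¹ • zz C ^ 2 := by
  unfold tt ww zz
  calc u C * v C * (v C * u C) = u C * (v C * v C) * u C := by
        rw [mul_assoc, mul_assoc, mul_assoc]
    _ = C⁻¹ • (u C * (u C * u C) * u C) := by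
        rw [rel_vv C hC, mul_smul_comm, smul_mul_assoc]
    _ = C⁻¹ • (u C * u C) ^ 2 := by rw [sq]; congr 1; simp [mul_assoc]
lemma wt (hC : C ≠ 0) : ww C * tt C = C⁻¹ • zz C ^ 2 := by
  unfold tt ww zz
  calc v C * u C * (u C * v C) = v C * (u C * u C) * v C := by
        rw [mul_assoc, mul_assoc, mul_assoc]
    _ = C • (v C * (v C * v C) * v C) := by
        rw [rel_uu C, mul_smul_comm, smul_mul_assoc]
    _ = C • ((v C * v C) * (v C * v C)) := by rw [mul_assoc, mul_assoc, mul_assoc]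
    _ = C⁻¹ • (u C * u C) ^ 2 := by
        rw [rel_vv C hC, smul_mul_assoc, mul_smul_comm, smul_smul, smul_smul, sq]
        rw [mul_inv_cancel₀ hC, one_mul]

lemma u_two_pow (p : ℕ) : u C ^ (2 * p) = zz C ^ p := by
  rw [pow_mul, sq]; rfl

lemma mon_w (p q : ℕ) : u C ^ (2 * p) * (v C * u C) ^ q = zz C ^ p * ww C ^ q := by
  rw [u_two_pow]; rfl

lemma u_mul_wpow_mul_v (q : ℕ) : u C * (v C * u C) ^ q * v C = tt C ^ (q + 1) := by
  show u C * ww C ^ q * v C = tt C ^ (q + 1)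
  rw [u_mul_w_pow C q, pow_succ, mul_assoc]; rfl

lemma mon_t (p q : ℕ) (hq : 1 ≤ q) :
    u C ^ (2 * p + 1) * (v C * u C) ^ (q - 1) * v C = zz C ^ p * tt C ^ q := by
  cases q with
  | zero => omega
  | succ n =>
    simp only [Nat.add_sub_cancel]
    rw [pow_succ, mul_assoc (u C ^ (2*p)) (u C) ((v C * u C)^n), mul_assoc,
      u_mul_wpow_mul_v, u_two_pow]


abbrev Rr := MvPolynomial (Fin 2) ℂ
abbrev Mt := Matrix (Fin 2) (Fin 2) Rr

open MvPolynomial in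
def UM : Mt := !![0, X 0 * X 1; X 0, 0]
open MvPolynomial in
def VM : Mt := !![0, MvPolynomial.C C⁻¹ * X 0; X 0 * X 1, 0]

open MvPolynomial in
lemma UVrel (hC : C ≠ 0) : UM * UM = C • (VM C * VM C) := by
  have hCC : (MvPolynomial.C C : Rr) * MvPolynomial.C C⁻¹ = 1 := by
    rw [← map_mul, mul_inv_cancel₀ hC, map_one]
  unfold UM VM
  rw [Matrix.mul_fin_two, Matrix.mul_fin_two]
  refine Matrix.ext fun i j => ?_
  fin_cases i <;> fin_cases j <;>
    simp [Matrix.smul_apply, MvPolynomial.smul_eq_C_mul] <;>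
    linear_combination (-(MvPolynomial.X 0 * MvPolynomial.X 0 * MvPolynomial.X 1)) * hCC

def ψ (hC : C ≠ 0) : A C →ₐ[ℂ] Mt :=
  RingQuot.liftAlgHom ℂ ⟨FreeAlgebra.lift ℂ ![UM, VM C], by
    rintro x y ⟨⟩
    simp only [map_mul, map_smul, FreeAlgebra.lift_ι_apply]
    show UM * UM = C • (VM C * VM C)
    exact UVrel C hC⟩

lemma ψ_u (hC : C ≠ 0) : ψ C hC (u C) = UM := by
  unfold ψ u
  rw [RingQuot.liftAlgHom_mkAlgHom_apply, FreeAlgebra.lift_ι_apply]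
  rfl

lemma ψ_v (hC : C ≠ 0) : ψ C hC (v C) = VM C := by
  unfold ψ v
  rw [RingQuot.liftAlgHom_mkAlgHom_apply, FreeAlgebra.lift_ι_apply]
  rfl

def DM (α β : Rr) : Mt := !![α, 0; 0, β]

lemma DM_mul (α β α' β' : Rr) : DM α β * DM α' β' = DM (α * α') (β * β') := by
  unfold DM; rw [Matrix.mul_fin_two]; norm_num

lemma DM_pow (α β : Rr) (n : ℕ) : DM α β ^ n = DM (α ^ n) (β ^ n) := by
  induction n with
  | zero => unfold DM; ext i j; fin_cases i <;> fin_cases j <;> simp [Matrix.one_apply]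
  | succ k ih => rw [pow_succ, ih, DM_mul, ← pow_succ, ← pow_succ]

open MvPolynomial in
lemma ψ_zz (hC : C ≠ 0) : ψ C hC (zz C) = DM (X 0 ^ 2 * X 1) (X 0 ^ 2 * X 1) := by
  unfold zz DM
  rw [map_mul, ψ_u C hC]; unfold UM
  rw [Matrix.mul_fin_two]
  refine Matrix.ext fun i j => ?_
  fin_cases i <;> fin_cases j <;> simp <;> ring

open MvPolynomial in
lemma ψ_ww (hC : C ≠ 0) :
    ψ C hC (ww C) = DM (MvPolynomial.C C⁻¹ * X 0 ^ 2) (X 0 ^ 2 * X 1 ^ 2) := by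
  unfold ww DM
  rw [map_mul, ψ_u C hC, ψ_v C hC]; unfold UM VM
  rw [Matrix.mul_fin_two]
  refine Matrix.ext fun i j => ?_
  fin_cases i <;> fin_cases j <;> simp <;> ring

open MvPolynomial in
lemma ψ_tt (hC : C ≠ 0) :
    ψ C hC (tt C) = DM (X 0 ^ 2 * X 1 ^ 2) (MvPolynomial.C C⁻¹ * X 0 ^ 2) := by
  unfold tt DM
  rw [map_mul, ψ_u C hC, ψ_v C hC]; unfold UM VM
  rw [Matrix.mul_fin_two]
  refine Matrix.ext fun i j => ?_
  fin_cases i <;> fin_cases j <;> simp <;> ring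

def ent : Mt →ₗ[ℂ] Rr where
  toFun M := M 0 0
  map_add' := by intros; simp
  map_smul' := by intros; simp

abbrev eeIdx := (ℕ × ℕ) ⊕ (ℕ × ℕ)

def ee : eeIdx → A C
  | .inl (p, q) => zz C ^ p * ww C ^ q
  | .inr (p, q) => zz C ^ p * tt C ^ (q + 1)

def dd : eeIdx → (Fin 2 →₀ ℕ)
  | .inl (p, q) => Finsupp.single 0 (2 * p + 2 * q) + Finsupp.single 1 p
  | .inr (p, q) => Finsupp.single 0 (2 * p + 2 * q + 2) + Finsupp.single 1 (p + 2 * q + 2)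

def coefU (hC : C ≠ 0) : eeIdx → ℂˣ
  | .inl (_, q) => (Units.mk0 C⁻¹ (inv_ne_zero hC)) ^ q
  | .inr _ => 1

lemma dd_inj : Function.Injective dd := by
  have key : ∀ j, (dd j 0, dd j 1) = (match j with
    | .inl (p, q) => (2 * p + 2 * q, p)
    | .inr (p, q) => (2 * p + 2 * q + 2, p + 2 * q + 2)) := by
    rintro (⟨p, q⟩ | ⟨p, q⟩) <;> simp [dd]
  intro a b hab
  have e0 : dd a 0 = dd b 0 := by rw [hab]
  have e1 : dd a 1 = dd b 1 := by rw [hab]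
  rcases a with ⟨p, q⟩ | ⟨p, q⟩ <;> rcases b with ⟨p', q'⟩ | ⟨p', q'⟩
  case inl.inl => simp [dd] at e0 e1; simp only [Sum.inl.injEq, Prod.mk.injEq]; omega
  case inl.inr => exfalso; simp [dd] at e0 e1; omega
  case inr.inl => exfalso; simp [dd] at e0 e1; omega
  case inr.inr => simp [dd] at e0 e1; simp only [Sum.inr.injEq, Prod.mk.injEq]; omega

open MvPolynomial in
lemma θ_ee (hC : C ≠ 0) (j : eeIdx) :
    ent (ψ C hC (ee C j)) = (coefU C hC j : ℂ) • MvPolynomial.monomial (dd j) (1 : ℂ) := by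
  have entDM : ∀ α β : Rr, ent (DM α β) = α := by intro α β; rfl
  have hmm : ∀ s t : Fin 2 →₀ ℕ, MvPolynomial.monomial (s + t) (1:ℂ) =
      MvPolynomial.monomial s 1 * MvPolynomial.monomial t 1 := by
    intro s t; rw [MvPolynomial.monomial_mul, one_mul]
  rcases j with ⟨p, q⟩ | ⟨p, q⟩ <;>
    simp only [ee, map_mul, map_pow, ψ_zz C hC, ψ_ww C hC, ψ_tt C hC, DM_pow, DM_mul, entDM,
      dd, coefU, hmm, ← MvPolynomial.X_pow_eq_monomial, MvPolynomial.smul_eq_C_mul,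
      Units.val_pow_eq_pow_val, Units.val_mk0, Units.val_one, one_mul, map_pow, map_one] <;>
    ring

lemma ee_li (hC : C ≠ 0) : LinearIndependent ℂ (ee C) := by
  have hbm : LinearIndependent ℂ (fun d : Fin 2 →₀ ℕ => MvPolynomial.monomial d (1 : ℂ)) := by
    have := (MvPolynomial.basisMonomials (Fin 2) ℂ).linearIndependent
    rwa [MvPolynomial.coe_basisMonomials] at this
  have h1 : LinearIndependent ℂ (fun j : eeIdx => MvPolynomial.monomial (dd j) (1 : ℂ)) :=
    hbm.comp dd dd_inj
  have h2 := h1.units_smul (coefU C hC)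
  refine LinearIndependent.of_comp (ent ∘ₗ (ψ C hC).toLinearMap) ?_
  have : ((ent ∘ₗ (ψ C hC).toLinearMap) ∘ ee C) =
      (coefU C hC • fun j : eeIdx => MvPolynomial.monomial (dd j) (1 : ℂ)) := by
    funext j
    simpa [Units.smul_def] using θ_ee C hC j
  rw [this]
  exact h2


def oo : Bool × eeIdx → A C
  | (b, j) => (if b then u C else v C) * ee C j

def SP : Submodule ℂ (A C) := Submodule.span ℂ (Set.range (ee C) ∪ Set.range (oo C))

lemma zz_pow_mul_comm (x : A C) (p : ℕ) : x * zz C ^ p = zz C ^ p * x :=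
  (((zz_comm C x).symm).pow_right p).eq

lemma zz_mul_ee (j : eeIdx) : zz C * ee C j ∈ Set.range (ee C) := by
  rcases j with ⟨p, q⟩ | ⟨p, q⟩
  · exact ⟨Sum.inl (p+1, q), by simp [ee, pow_succ', mul_assoc]⟩
  · exact ⟨Sum.inr (p+1, q), by simp [ee, pow_succ', mul_assoc]⟩

lemma ww_mul_ee (hC : C ≠ 0) (j : eeIdx) :
    ww C * ee C j ∈ SP C := by
  rcases j with ⟨p, q⟩ | ⟨p, q⟩
  · refine Submodule.subset_span (Or.inl ⟨Sum.inl (p, q+1), ?_⟩)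
    show zz C ^ p * ww C ^ (q+1) = ww C * (zz C ^ p * ww C ^ q)
    calc zz C ^ p * ww C ^ (q+1) = zz C ^ p * (ww C * ww C ^ q) := by
          rw [pow_succ' (ww C) q]
      _ = (zz C ^ p * ww C) * ww C ^ q := (mul_assoc _ _ _).symm
      _ = (ww C * zz C ^ p) * ww C ^ q := by rw [zz_pow_mul_comm]
      _ = ww C * (zz C ^ p * ww C ^ q) := mul_assoc _ _ _
  · have key : ww C * (zz C ^ p * tt C ^ (q+1)) = C⁻¹ • (zz C ^ (p+2) * tt C ^ q) := by
      calc ww C * (zz C ^ p * tt C ^ (q+1))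
          = (ww C * zz C ^ p) * tt C ^ (q+1) := (mul_assoc _ _ _).symm
        _ = (zz C ^ p * ww C) * tt C ^ (q+1) := by rw [zz_pow_mul_comm]
        _ = zz C ^ p * (ww C * (tt C * tt C ^ q)) := by rw [mul_assoc, pow_succ' (tt C) q]
        _ = zz C ^ p * ((ww C * tt C) * tt C ^ q) := by rw [mul_assoc]
        _ = zz C ^ p * ((C⁻¹ • zz C ^ 2) * tt C ^ q) := by rw [wt C hC]
        _ = C⁻¹ • (zz C ^ p * (zz C ^ 2 * tt C ^ q)) := by
            rw [smul_mul_assoc, mul_smul_comm]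
        _ = C⁻¹ • (zz C ^ (p+2) * tt C ^ q) := by rw [← mul_assoc, ← pow_add]
    rw [show ee C (Sum.inr (p,q)) = zz C ^ p * tt C ^ (q+1) from rfl, key]
    cases q with
    | zero =>
      refine Submodule.smul_mem _ _ (Submodule.subset_span (Or.inl ⟨Sum.inl (p+2, 0), ?_⟩))
      simp [ee]
    | succ n =>
      exact Submodule.smul_mem _ _ (Submodule.subset_span (Or.inl ⟨Sum.inr (p+2, n), rfl⟩))

lemma tt_mul_ee (hC : C ≠ 0) (j : eeIdx) :
    tt C * ee C j ∈ SP C := by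
  rcases j with ⟨p, q⟩ | ⟨p, q⟩
  · cases q with
    | zero =>
      refine Submodule.subset_span (Or.inl ⟨Sum.inr (p, 0), ?_⟩)
      show zz C ^ p * tt C ^ (0+1) = tt C * (zz C ^ p * ww C ^ 0)
      simp [zz_pow_mul_comm]
    | succ n =>
      have key : tt C * (zz C ^ p * ww C ^ (n+1)) = C⁻¹ • (zz C ^ (p+2) * ww C ^ n) := by
        calc tt C * (zz C ^ p * ww C ^ (n+1))
            = (tt C * zz C ^ p) * ww C ^ (n+1) := (mul_assoc _ _ _).symm
          _ = (zz C ^ p * tt C) * ww C ^ (n+1) := by rw [zz_pow_mul_comm]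
          _ = zz C ^ p * (tt C * (ww C * ww C ^ n)) := by rw [mul_assoc, pow_succ' (ww C) n]
          _ = zz C ^ p * ((tt C * ww C) * ww C ^ n) := by rw [mul_assoc]
          _ = zz C ^ p * ((C⁻¹ • zz C ^ 2) * ww C ^ n) := by rw [tw C hC]
          _ = C⁻¹ • (zz C ^ p * (zz C ^ 2 * ww C ^ n)) := by
              rw [smul_mul_assoc, mul_smul_comm]
          _ = C⁻¹ • (zz C ^ (p+2) * ww C ^ n) := by rw [← mul_assoc, ← pow_add]
      rw [show ee C (Sum.inl (p,n+1)) = zz C ^ p * ww C ^ (n+1) from rfl, key]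
      exact Submodule.smul_mem _ _ (Submodule.subset_span (Or.inl ⟨Sum.inl (p+2, n), rfl⟩))
  · refine Submodule.subset_span (Or.inl ⟨Sum.inr (p, q+1), ?_⟩)
    show zz C ^ p * tt C ^ (q+1+1) = tt C * (zz C ^ p * tt C ^ (q+1))
    calc zz C ^ p * tt C ^ (q+1+1) = zz C ^ p * (tt C * tt C ^ (q+1)) := by
          rw [pow_succ' (tt C) (q+1)]
      _ = (zz C ^ p * tt C) * tt C ^ (q+1) := (mul_assoc _ _ _).symm
      _ = (tt C * zz C ^ p) * tt C ^ (q+1) := by rw [zz_pow_mul_comm]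
      _ = tt C * (zz C ^ p * tt C ^ (q+1)) := mul_assoc _ _ _

lemma u_mul_SP (hC : C ≠ 0) (x : A C) (hx : x ∈ SP C) : u C * x ∈ SP C := by
  induction hx using Submodule.span_induction with
  | mem y hy =>
    rcases hy with ⟨j, rfl⟩ | ⟨⟨b, j⟩, rfl⟩
    · exact Submodule.subset_span (Or.inr ⟨(true, j), by simp [oo]⟩)
    · cases b
      · -- u * (v * ee j) = tt * ee j
        have : u C * oo C (false, j) = tt C * ee C j := by
          show u C * (v C * ee C j) = tt C * ee C j
          rw [← mul_assoc]; rfl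
        rw [this]; exact tt_mul_ee C hC j
      · have : u C * oo C (true, j) = zz C * ee C j := by
          show u C * (u C * ee C j) = zz C * ee C j
          rw [← mul_assoc]; rfl
        rw [this]
        obtain ⟨k, hk⟩ := zz_mul_ee C j
        rw [← hk]
        exact Submodule.subset_span (Or.inl ⟨k, rfl⟩)
  | zero => simp
  | add a b _ _ ha hb => rw [mul_add]; exact Submodule.add_mem _ ha hb
  | smul c a _ ha => rw [mul_smul_comm]; exact Submodule.smul_mem _ _ ha

lemma v_mul_SP (hC : C ≠ 0) (x : A C) (hx : x ∈ SP C) : v C * x ∈ SP C := by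
  induction hx using Submodule.span_induction with
  | mem y hy =>
    rcases hy with ⟨j, rfl⟩ | ⟨⟨b, j⟩, rfl⟩
    · exact Submodule.subset_span (Or.inr ⟨(false, j), by simp [oo]⟩)
    · cases b
      · have : v C * oo C (false, j) = C⁻¹ • (zz C * ee C j) := by
          show v C * (v C * ee C j) = C⁻¹ • (zz C * ee C j)
          rw [← mul_assoc, rel_vv C hC, smul_mul_assoc]; rfl
        rw [this]
        obtain ⟨k, hk⟩ := zz_mul_ee C j
        rw [← hk]
        exact Submodule.smul_mem _ _ (Submodule.subset_span (Or.inl ⟨k, rfl⟩))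
      · have : v C * oo C (true, j) = ww C * ee C j := by
          show v C * (u C * ee C j) = ww C * ee C j
          rw [← mul_assoc]; rfl
        rw [this]; exact ww_mul_ee C hC j
  | zero => simp
  | add a b _ _ ha hb => rw [mul_add]; exact Submodule.add_mem _ ha hb
  | smul c a _ ha => rw [mul_smul_comm]; exact Submodule.smul_mem _ _ ha

lemma SP_top (hC : C ≠ 0) (x : A C) : x ∈ SP C := by
  have hgen : ∀ a : A C, ∀ s ∈ SP C, a * s ∈ SP C := by
    intro a
    have ha : a ∈ Algebra.adjoin ℂ ({u C, v C} : Set (A C)) := by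
      rw [adjoin_uv]; trivial
    induction ha using Algebra.adjoin_induction with
    | mem y hy =>
      rcases hy with rfl | rfl
      · exact fun s hs => u_mul_SP C hC s hs
      · exact fun s hs => v_mul_SP C hC s hs
    | algebraMap r =>
      intro s hs
      rw [Algebra.algebraMap_eq_smul_one, smul_mul_assoc, one_mul]
      exact Submodule.smul_mem _ _ hs
    | add a b ha hb iha ihb =>
      intro s hs
      rw [add_mul]
      exact Submodule.add_mem _ (iha s hs) (ihb s hs)
    | mul a b ha hb iha ihb =>
      intro s hs
      rw [mul_assoc]
      exact iha _ (ihb s hs)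
  have h1 : (1 : A C) ∈ SP C := by
    refine Submodule.subset_span (Or.inl ⟨Sum.inl (0, 0), ?_⟩)
    simp [ee]
  simpa using hgen x 1 h1


lemma bal_wt (hC : C ≠ 0) (a : ℕ) : ww C ^ a * tt C ^ a = (C⁻¹) ^ a • zz C ^ (2*a) := by
  induction a with
  | zero => simp
  | succ n ih =>
    calc ww C ^ (n+1) * tt C ^ (n+1)
        = (ww C * ww C ^ n) * (tt C ^ n * tt C) := by rw [pow_succ' (ww C) n, pow_succ (tt C) n]
      _ = ww C * ((ww C ^ n * tt C ^ n) * tt C) := by rw [mul_assoc, mul_assoc]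
      _ = ww C * (((C⁻¹) ^ n • zz C ^ (2*n)) * tt C) := by rw [ih]
      _ = (C⁻¹) ^ n • (ww C * (zz C ^ (2*n) * tt C)) := by
          rw [smul_mul_assoc, mul_smul_comm]
      _ = (C⁻¹) ^ n • (zz C ^ (2*n) * (ww C * tt C)) := by
          rw [← mul_assoc, zz_pow_mul_comm, mul_assoc]
      _ = (C⁻¹) ^ n • (zz C ^ (2*n) * (C⁻¹ • zz C ^ 2)) := by rw [wt C hC]
      _ = (C⁻¹) ^ (n+1) • zz C ^ (2*(n+1)) := by
          rw [mul_smul_comm, smul_smul, ← pow_succ, ← pow_add,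
            show 2*n+2 = 2*(n+1) from by omega]

lemma bal_tw (hC : C ≠ 0) (a : ℕ) : tt C ^ a * ww C ^ a = (C⁻¹) ^ a • zz C ^ (2*a) := by
  induction a with
  | zero => simp
  | succ n ih =>
    calc tt C ^ (n+1) * ww C ^ (n+1)
        = (tt C * tt C ^ n) * (ww C ^ n * ww C) := by rw [pow_succ' (tt C) n, pow_succ (ww C) n]
      _ = tt C * ((tt C ^ n * ww C ^ n) * ww C) := by rw [mul_assoc, mul_assoc]
      _ = tt C * (((C⁻¹) ^ n • zz C ^ (2*n)) * ww C) := by rw [ih]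
      _ = (C⁻¹) ^ n • (tt C * (zz C ^ (2*n) * ww C)) := by
          rw [smul_mul_assoc, mul_smul_comm]
      _ = (C⁻¹) ^ n • (zz C ^ (2*n) * (tt C * ww C)) := by
          rw [← mul_assoc, zz_pow_mul_comm, mul_assoc]
      _ = (C⁻¹) ^ n • (zz C ^ (2*n) * (C⁻¹ • zz C ^ 2)) := by rw [tw C hC]
      _ = (C⁻¹) ^ (n+1) • zz C ^ (2*(n+1)) := by
          rw [mul_smul_comm, smul_smul, ← pow_succ, ← pow_add,
            show 2*n+2 = 2*(n+1) from by omega]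

lemma w_mul_t_pow (hC : C ≠ 0) (a e : ℕ) (h : e ≤ a) :
    ww C ^ a * tt C ^ e = (C⁻¹) ^ e • (zz C ^ (2*e) * ww C ^ (a - e)) := by
  obtain ⟨r, rfl⟩ := Nat.exists_eq_add_of_le h
  calc ww C ^ (e + r) * tt C ^ e
      = (ww C ^ r * ww C ^ e) * tt C ^ e := by rw [← pow_add, Nat.add_comm]
    _ = ww C ^ r * (ww C ^ e * tt C ^ e) := mul_assoc _ _ _
    _ = ww C ^ r * ((C⁻¹) ^ e • zz C ^ (2*e)) := by rw [bal_wt C hC]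
    _ = (C⁻¹) ^ e • (ww C ^ r * zz C ^ (2*e)) := by rw [mul_smul_comm]
    _ = (C⁻¹) ^ e • (zz C ^ (2*e) * ww C ^ (e + r - e)) := by
        rw [Nat.add_sub_cancel_left, zz_pow_mul_comm]

lemma t_mul_w_pow (hC : C ≠ 0) (a e : ℕ) (h : e ≤ a) :
    tt C ^ a * ww C ^ e = (C⁻¹) ^ e • (zz C ^ (2*e) * tt C ^ (a - e)) := by
  obtain ⟨r, rfl⟩ := Nat.exists_eq_add_of_le h
  calc tt C ^ (e + r) * ww C ^ e
      = (tt C ^ r * tt C ^ e) * ww C ^ e := by rw [← pow_add, Nat.add_comm]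
    _ = tt C ^ r * (tt C ^ e * ww C ^ e) := mul_assoc _ _ _
    _ = tt C ^ r * ((C⁻¹) ^ e • zz C ^ (2*e)) := by rw [bal_tw C hC]
    _ = (C⁻¹) ^ e • (tt C ^ r * zz C ^ (2*e)) := by rw [mul_smul_comm]
    _ = (C⁻¹) ^ e • (zz C ^ (2*e) * tt C ^ (e + r - e)) := by
        rw [Nat.add_sub_cancel_left, zz_pow_mul_comm]

variable (m : ℕ)

def Fs (s : ℕ) : A C := ww C ^ (m*s) + ((-1:ℂ))^s • tt C ^ (m*s)

def gG : A C := tt C ^ m - ww C ^ m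

lemma Fs_mul_g (hC : C ≠ 0) (n : ℕ) :
    Fs C m (n+1) * gG C m =
      -Fs C m (n+2) + ((C⁻¹)^m) • (zz C ^ (2*m) * Fs C m n) := by
  have hma : m ≤ m * (n+1) := by rw [Nat.mul_succ]; omega
  have hsub : m*(n+1) - m = m*n := by rw [Nat.mul_succ, Nat.add_sub_cancel]
  have e1 := w_mul_t_pow C hC (m*(n+1)) m hma
  have e2 := t_mul_w_pow C hC (m*(n+1)) m hma
  rw [hsub] at e1 e2
  unfold Fs gG
  rw [add_mul, smul_mul_assoc, mul_sub, mul_sub, e1, e2, ← pow_add, ← pow_add,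
    show m*(n+1)+m = m*(n+2) from by ring]
  simp only [mul_add, mul_smul_comm]
  match_scalars <;> ring

lemma Fs_zero_eq : Fs C m 0 = (2:ℂ) • (1 : A C) := by
  unfold Fs
  rw [Nat.mul_zero, pow_zero, pow_zero, pow_zero, one_smul, two_smul]

lemma Fs_one_eq : Fs C m 1 = -gG C m := by
  unfold Fs gG
  rw [Nat.mul_one, pow_one, neg_sub]
  module

def Good : Submodule ℂ (A C) :=
  Submodule.span ℂ (Set.range fun ps : ℕ × ℕ => zz C ^ ps.1 * Fs C m ps.2)

lemma Good_mul_g (hC : C ≠ 0) (x : A C) (hx : x ∈ Good C m) :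
    x * gG C m ∈ Good C m := by
  induction hx using Submodule.span_induction with
  | mem y hy =>
    obtain ⟨⟨p, s⟩, rfl⟩ := hy
    show zz C ^ p * Fs C m s * gG C m ∈ Good C m
    cases s with
    | zero =>
      have key : zz C ^ p * Fs C m 0 * gG C m = (-2:ℂ) • (zz C ^ p * Fs C m 1) := by
        rw [Fs_zero_eq, Fs_one_eq, mul_smul_comm, mul_one, smul_mul_assoc,
          mul_neg (zz C ^ p) (gG C m)]
        module
      rw [key]
      exact Submodule.smul_mem _ _ (Submodule.subset_span ⟨(p, 1), rfl⟩)
    | succ n =>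
      rw [mul_assoc, Fs_mul_g C m hC n]
      have e3 : zz C ^ p * (-Fs C m (n+2) + (C⁻¹)^m • (zz C ^ (2*m) * Fs C m n))
          = -(zz C ^ p * Fs C m (n+2)) + (C⁻¹)^m • (zz C ^ (p+2*m) * Fs C m n) := by
        rw [pow_add]
        simp only [mul_add, mul_smul_comm, mul_assoc]
        rw [mul_neg (zz C ^ p) (Fs C m (n+2))]
      rw [e3]
      exact Submodule.add_mem _ (Submodule.neg_mem _ (Submodule.subset_span ⟨(p, n+2), rfl⟩))
        (Submodule.smul_mem _ _ (Submodule.subset_span ⟨(p+2*m, n), rfl⟩))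
  | zero => rw [zero_mul]; exact Submodule.zero_mem _
  | add a b _ _ ha hb => rw [add_mul]; exact Submodule.add_mem _ ha hb
  | smul c a _ ha => rw [smul_mul_assoc]; exact Submodule.smul_mem _ _ ha

lemma zp_gs_mem_Good (hC : C ≠ 0) (p s : ℕ) : zz C ^ p * gG C m ^ s ∈ Good C m := by
  induction s with
  | zero =>
    rw [pow_zero, mul_one]
    have : zz C ^ p = (2⁻¹ : ℂ) • (zz C ^ p * Fs C m 0) := by
      rw [Fs_zero_eq, mul_smul_comm, mul_one, smul_smul]
      norm_num
    rw [this]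
    exact Submodule.smul_mem _ _ (Submodule.subset_span ⟨(p, 0), rfl⟩)
  | succ n ih =>
    rw [pow_succ, ← mul_assoc]
    exact Good_mul_g C m hC _ ih

lemma adjoin_le_Good (hC : C ≠ 0) :
    Subalgebra.toSubmodule (Algebra.adjoin ℂ ({zz C, gG C m} : Set (A C))) ≤ Good C m := by
  rw [Algebra.adjoin_eq_span]
  rw [Submodule.span_le]
  intro x hx
  obtain ⟨p, s, rfl⟩ : ∃ p s, x = zz C ^ p * gG C m ^ s := by
    induction hx using Submonoid.closure_induction with
    | mem y hy =>
      rcases hy with rfl | rfl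
      · exact ⟨1, 0, by simp⟩
      · exact ⟨0, 1, by simp⟩
    | one => exact ⟨0, 0, by simp⟩
    | mul a b ha hb iha ihb =>
      obtain ⟨p, s, rfl⟩ := iha
      obtain ⟨p', s', rfl⟩ := ihb
      refine ⟨p + p', s + s', ?_⟩
      rw [pow_add, pow_add]
      calc zz C ^ p * gG C m ^ s * (zz C ^ p' * gG C m ^ s')
          = zz C ^ p * ((gG C m ^ s * zz C ^ p') * gG C m ^ s') := by
            rw [mul_assoc, mul_assoc]
        _ = zz C ^ p * ((zz C ^ p' * gG C m ^ s) * gG C m ^ s') := by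
            rw [zz_pow_mul_comm]
        _ = zz C ^ p * zz C ^ p' * (gG C m ^ s * gG C m ^ s') := by
            rw [mul_assoc, mul_assoc]
  exact zp_gs_mem_Good C m hC p s

lemma Fs_mem_adjoin (hC : C ≠ 0) (s : ℕ) :
    Fs C m s ∈ Algebra.adjoin ℂ ({zz C, gG C m} : Set (A C)) := by
  have hz : zz C ∈ Algebra.adjoin ℂ ({zz C, gG C m} : Set (A C)) :=
    Algebra.subset_adjoin (Or.inl rfl)
  have hg : gG C m ∈ Algebra.adjoin ℂ ({zz C, gG C m} : Set (A C)) :=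
    Algebra.subset_adjoin (Or.inr rfl)
  induction s using Nat.twoStepInduction with
  | zero =>
    rw [Fs_zero_eq]
    exact Subalgebra.smul_mem _ (Subalgebra.one_mem _) _
  | one =>
    rw [Fs_one_eq]
    exact neg_mem hg
  | more n ih1 ih2 =>
    have key : Fs C m (n+2) =
        ((C⁻¹)^m) • (zz C ^ (2*m) * Fs C m n) - Fs C m (n+1) * gG C m := by
      rw [Fs_mul_g C m hC n]; abel
    rw [key]
    refine sub_mem ?_ ?_
    · exact Subalgebra.smul_mem _ (mul_mem (pow_mem hz _) ih1) _
    · exact mul_mem ih2 hg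

lemma Good_le_adjoin (hC : C ≠ 0) :
    Good C m ≤ Subalgebra.toSubmodule (Algebra.adjoin ℂ ({zz C, gG C m} : Set (A C))) := by
  rw [Good, Submodule.span_le]
  rintro x ⟨⟨p, s⟩, rfl⟩
  have hz : zz C ∈ Algebra.adjoin ℂ ({zz C, gG C m} : Set (A C)) :=
    Algebra.subset_adjoin (Or.inl rfl)
  show zz C ^ p * Fs C m s ∈ Algebra.adjoin ℂ ({zz C, gG C m} : Set (A C))
  exact mul_mem (pow_mem hz p) (Fs_mem_adjoin C m hC s)


section Roots

variable (mm : ℕ) (lam : ℂ)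

lemma lam_prim (hm : 1 ≤ mm) (hlam : lam = Complex.exp (Real.pi * Complex.I / mm)) :
    IsPrimitiveRoot lam (2 * mm) := by
  have h2m : ((2 * mm : ℕ) : ℂ) = 2 * (mm : ℂ) := by push_cast; ring
  have hmne : (mm : ℂ) ≠ 0 := Nat.cast_ne_zero.mpr (by omega)
  have hprim := Complex.isPrimitiveRoot_exp (2 * mm) (by omega)
  have h1 : Real.pi * Complex.I / mm = 2 * Real.pi * Complex.I / ((2*mm : ℕ) : ℂ) := by
    rw [h2m]
    field_simp
  rw [hlam, h1]
  exact hprim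

lemma lam_pow_eq_one_iff (hm : 1 ≤ mm) (hlam : lam = Complex.exp (Real.pi * Complex.I / mm))
    (k : ℕ) : lam ^ k = 1 ↔ 2 * mm ∣ k :=
  (lam_prim mm lam hm hlam).pow_eq_one_iff_dvd k

lemma lam_ne_zero (hlam : lam = Complex.exp (Real.pi * Complex.I / mm)) : lam ≠ 0 := by
  rw [hlam]; exact Complex.exp_ne_zero _

lemma lam_pow_m (hm : 1 ≤ mm) (hlam : lam = Complex.exp (Real.pi * Complex.I / mm)) :
    lam ^ mm = -1 := by
  have hmne : (mm : ℂ) ≠ 0 := Nat.cast_ne_zero.mpr (by omega)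
  rw [hlam, ← Complex.exp_nat_mul]
  rw [show (mm : ℂ) * (Real.pi * Complex.I / mm) = Real.pi * Complex.I from by field_simp]
  exact Complex.exp_pi_mul_I

variable (ii : ℕ)

lemma i_odd (hm : 1 ≤ mm) (hcop : Nat.gcd ii (2 * mm) = 1) : Odd ii := by
  have h2 : Nat.Coprime ii 2 := Nat.Coprime.coprime_dvd_right ⟨mm, rfl⟩ hcop
  have h2' : Nat.gcd ii 2 = 1 := h2
  rcases Nat.even_or_odd ii with he | ho
  · exfalso
    obtain ⟨t, rfl⟩ := he
    have h3 : (2:ℕ) ∣ Nat.gcd (t+t) 2 := Nat.dvd_gcd ⟨t, by omega⟩ dvd_rfl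
    rw [h2'] at h3
    omega
  · exact ho

lemma lam_pow_ims (hm : 1 ≤ mm) (hlam : lam = Complex.exp (Real.pi * Complex.I / mm))
    (hcop : Nat.gcd ii (2 * mm) = 1) (s : ℕ) :
    lam ^ (ii * (mm * s)) = (-1 : ℂ) ^ s := by
  have : ii * (mm * s) = mm * (ii * s) := by ring
  rw [this, pow_mul, lam_pow_m mm lam hm hlam, pow_mul,
    Odd.neg_one_pow (i_odd mm ii hm hcop)]

lemma lam_zpow_ims (hm : 1 ≤ mm) (hlam : lam = Complex.exp (Real.pi * Complex.I / mm))
    (hcop : Nat.gcd ii (2 * mm) = 1) (s : ℕ) :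
    lam ^ (-((ii * (mm * s) : ℕ) : ℤ)) = (-1 : ℂ) ^ s := by
  rw [zpow_neg, zpow_natCast, lam_pow_ims mm lam ii hm hlam hcop s]
  rcases Nat.even_or_odd s with he | ho
  · rw [he.neg_one_pow]; norm_num
  · rw [ho.neg_one_pow]; norm_num

lemma dfac_one_iff (hm : 1 ≤ mm) (hlam : lam = Complex.exp (Real.pi * Complex.I / mm))
    (hcop : Nat.gcd ii (2 * mm) = 1) (q : ℕ) :
    lam ^ (ii * q) * lam ^ (ii * q) = 1 ↔ mm ∣ q := by
  rw [← pow_add, show ii * q + ii * q = 2 * (ii * q) from by ring,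
    lam_pow_eq_one_iff mm lam hm hlam]
  constructor
  · intro h
    have h1 : mm ∣ ii * q := (Nat.mul_dvd_mul_iff_left (by omega : 0 < 2)).mp h
    have hco : Nat.Coprime mm ii := by
      have : Nat.Coprime ii mm := Nat.Coprime.coprime_dvd_right ⟨2, by ring⟩ hcop
      exact this.symm
    exact hco.dvd_of_dvd_mul_left h1
  · rintro ⟨t, rfl⟩
    exact ⟨ii * t, by ring⟩

lemma dfac_one_iff' (hm : 1 ≤ mm) (hlam : lam = Complex.exp (Real.pi * Complex.I / mm))
    (hcop : Nat.gcd ii (2 * mm) = 1) (q : ℕ) :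
    lam ^ (-((ii * q : ℕ) : ℤ)) * lam ^ (-((ii * q : ℕ) : ℤ)) = 1 ↔ mm ∣ q := by
  rw [zpow_neg, zpow_natCast, ← mul_inv, inv_eq_one]
  exact dfac_one_iff mm lam ii hm hlam hcop q

end Roots



lemma tau_zz (τ : A C →ₐ[ℂ] A C) (hτu : τ (u C) = -u C) (hτv : τ (v C) = -v C) :
    τ (zz C) = zz C := by
  show τ (u C * u C) = u C * u C
  rw [map_mul, hτu, neg_mul_neg (u C) (u C)]

lemma tau_ww (τ : A C →ₐ[ℂ] A C) (hτu : τ (u C) = -u C) (hτv : τ (v C) = -v C) :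
    τ (ww C) = ww C := by
  show τ (v C * u C) = v C * u C
  rw [map_mul, hτu, hτv, neg_mul_neg (v C) (u C)]

lemma tau_tt (τ : A C →ₐ[ℂ] A C) (hτu : τ (u C) = -u C) (hτv : τ (v C) = -v C) :
    τ (tt C) = tt C := by
  show τ (u C * v C) = u C * v C
  rw [map_mul, hτu, hτv, neg_mul_neg (u C) (v C)]

lemma tau_ee (τ : A C →ₐ[ℂ] A C) (hτu : τ (u C) = -u C) (hτv : τ (v C) = -v C) (j : eeIdx) :
    τ (ee C j) = ee C j := by
  rcases j with ⟨p, q⟩ | ⟨p, q⟩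
  · show τ (zz C ^ p * ww C ^ q) = zz C ^ p * ww C ^ q
    rw [map_mul, map_pow, map_pow, tau_zz C τ hτu hτv, tau_ww C τ hτu hτv]
  · show τ (zz C ^ p * tt C ^ (q+1)) = zz C ^ p * tt C ^ (q+1)
    rw [map_mul, map_pow, map_pow, tau_zz C τ hτu hτv, tau_tt C τ hτu hτv]

lemma tau_oo (τ : A C →ₐ[ℂ] A C) (hτu : τ (u C) = -u C) (hτv : τ (v C) = -v C)
    (b : Bool) (j : eeIdx) :
    τ (oo C (b, j)) = -oo C (b, j) := by
  cases b
  · show τ (v C * ee C j) = -(v C * ee C j)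
    rw [map_mul, tau_ee C τ hτu hτv, hτv, neg_mul (v C) (ee C j)]
  · show τ (u C * ee C j) = -(u C * ee C j)
    rw [map_mul, tau_ee C τ hτu hτv, hτu, neg_mul (u C) (ee C j)]

def emb2 (m : ℕ) : eeIdx → eeIdx
  | .inl (p, s) => Sum.inl (p, m * s)
  | .inr (p, s) => Sum.inr (p, m * s + (m - 1))

lemma emb2_inj (m : ℕ) (hm : 1 ≤ m) : Function.Injective (emb2 m) := by
  rintro (⟨p, s⟩ | ⟨p, s⟩) (⟨p', s'⟩ | ⟨p', s'⟩) h
  · simp only [emb2, Sum.inl.injEq, Prod.mk.injEq] at h ⊢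
    refine ⟨h.1, Nat.eq_of_mul_eq_mul_left hm h.2⟩
  · exact absurd h (by simp [emb2])
  · exact absurd h (by simp [emb2])
  · simp only [emb2, Sum.inr.injEq, Prod.mk.injEq] at h ⊢
    obtain ⟨h1, h2⟩ := h
    refine ⟨h1, ?_⟩
    have : m * s = m * s' := by omega
    exact Nat.eq_of_mul_eq_mul_left hm this

def TT : eeIdx → eeIdx
  | .inl (p, 0) => Sum.inl (p, 0)
  | .inl (p, s+1) => Sum.inr (p, s)
  | .inr (p, s) => Sum.inl (p, s+1)

def sg : eeIdx → ℂ
  | .inl (_, 0) => 1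
  | .inl (_, s+1) => (-1)^(s+1)
  | .inr (_, s) => (-1)^(s+1)

lemma TT_invol (j : eeIdx) : TT (TT j) = j := by
  rcases j with ⟨p, q⟩ | ⟨p, q⟩
  · cases q <;> rfl
  · rfl

lemma sg_TT (j : eeIdx) : sg (TT j) = sg j := by
  rcases j with ⟨p, q⟩ | ⟨p, q⟩
  · cases q <;> rfl
  · rfl

lemma sg_sq (j : eeIdx) : sg j * sg j = 1 := by
  rcases j with ⟨p, q⟩ | ⟨p, q⟩
  · cases q with
    | zero => simp [sg]
    | succ n => show ((-1:ℂ))^(n+1) * (-1)^(n+1) = 1; rw [← mul_pow]; norm_num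
  · show ((-1:ℂ))^(q+1) * (-1)^(q+1) = 1; rw [← mul_pow]; norm_num


end Stmt15

open Stmt15 in
theorem stmt_15 (m : ℕ) (hm : 2 ≤ m) (lam : ℂ)
    (hlam : lam = Complex.exp (Real.pi * Complex.I / m))
    (i : ℕ) (hipos : 1 ≤ i) (hcop : Nat.gcd i (2 * m) = 1)
    (C : ℂ) (hC : C = lam ^ i)
    (τ : A C →ₐ[ℂ] A C) (hτu : τ (u C) = -u C) (hτv : τ (v C) = -v C)
    (Sp Sm : A C →ₗ[ℂ] A C)
    (hSp1 : ∀ p q : ℕ, 1 ≤ q →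
      Sp (u C ^ (2 * p) * (v C * u C) ^ q) =
        lam ^ (-((i * q : ℕ) : ℤ)) • (u C ^ (2 * p + 1) * (v C * u C) ^ (q - 1) * v C))
    (hSp2 : ∀ p q : ℕ, 1 ≤ q →
      Sp (u C ^ (2 * p + 1) * (v C * u C) ^ (q - 1) * v C) =
        lam ^ (i * q) • (u C ^ (2 * p) * (v C * u C) ^ q))
    (hSp3 : ∀ p : ℕ, Sp (u C ^ (2 * p)) = u C ^ (2 * p))
    (hSm1 : ∀ p q : ℕ, 1 ≤ q →
      Sm (u C ^ (2 * p) * (v C * u C) ^ q) =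
        lam ^ (i * q) • (u C ^ (2 * p + 1) * (v C * u C) ^ (q - 1) * v C))
    (hSm2 : ∀ p q : ℕ, 1 ≤ q →
      Sm (u C ^ (2 * p + 1) * (v C * u C) ^ (q - 1) * v C) =
        lam ^ (-((i * q : ℕ) : ℤ)) • (u C ^ (2 * p) * (v C * u C) ^ q))
    (hSm3 : ∀ p : ℕ, Sm (u C ^ (2 * p)) = u C ^ (2 * p)) :
    {F : A C | τ F = F ∧ Sp F = F ∧ Sm F = F} =
      (Algebra.adjoin ℂ
        ({u C ^ 2, (u C * v C) ^ m - (v C * u C) ^ m} : Set (A C)) : Set (A C)) := by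
  have hlamne : lam ≠ 0 := lam_ne_zero m lam hlam
  have hCne : C ≠ 0 := by rw [hC]; exact pow_ne_zero _ hlamne
  have hm1 : 1 ≤ m := by omega
  -- translated hypotheses
  have hSp1' : ∀ p q : ℕ, 1 ≤ q → Sp (zz C ^ p * ww C ^ q)
      = lam ^ (-((i * q : ℕ) : ℤ)) • (zz C ^ p * tt C ^ q) := fun p q hq => by
    have h := hSp1 p q hq
    rwa [mon_w, mon_t C p q hq] at h
  have hSp2' : ∀ p q : ℕ, 1 ≤ q → Sp (zz C ^ p * tt C ^ q)
      = lam ^ (i * q) • (zz C ^ p * ww C ^ q) := fun p q hq => by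
    have h := hSp2 p q hq
    rwa [mon_w, mon_t C p q hq] at h
  have hSp3' : ∀ p : ℕ, Sp (zz C ^ p) = zz C ^ p := fun p => by
    have h := hSp3 p
    rwa [u_two_pow] at h
  have hSm1' : ∀ p q : ℕ, 1 ≤ q → Sm (zz C ^ p * ww C ^ q)
      = lam ^ (i * q) • (zz C ^ p * tt C ^ q) := fun p q hq => by
    have h := hSm1 p q hq
    rwa [mon_w, mon_t C p q hq] at h
  have hSm2' : ∀ p q : ℕ, 1 ≤ q → Sm (zz C ^ p * tt C ^ q)
      = lam ^ (-((i * q : ℕ) : ℤ)) • (zz C ^ p * ww C ^ q) := fun p q hq => by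
    have h := hSm2 p q hq
    rwa [mon_w, mon_t C p q hq] at h
  have hSm3' : ∀ p : ℕ, Sm (zz C ^ p) = zz C ^ p := fun p => by
    have h := hSm3 p
    rwa [u_two_pow] at h
  have husq : u C ^ 2 = zz C := sq (u C)
  have hgg : (u C * v C) ^ m - (v C * u C) ^ m = gG C m := rfl
  -- Sp/Sm fixed on Good
  have hmpos : ∀ n : ℕ, 1 ≤ m * (n+1) := fun n => Nat.one_le_iff_ne_zero.mpr
    (by positivity)
  have hsqr : ∀ n : ℕ, ((-1:ℂ))^(n+1) * ((-1:ℂ))^(n+1) = 1 := fun n => by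
    rw [← mul_pow]; norm_num
  have hSpGood : ∀ x ∈ Good C m, Sp x = x := by
    intro x hx
    have hle : Good C m ≤ LinearMap.eqLocus Sp (LinearMap.id : A C →ₗ[ℂ] A C) := by
      rw [Good]
      apply Submodule.span_le.mpr
      rintro y ⟨⟨p, s⟩, rfl⟩
      rw [SetLike.mem_coe, LinearMap.mem_eqLocus]
      show Sp (zz C ^ p * Fs C m s) = zz C ^ p * Fs C m s
      cases s with
      | zero => rw [Fs_zero_eq, mul_smul_comm, mul_one, map_smul, hSp3']
      | succ n =>
        have hFs : zz C ^ p * Fs C m (n+1) = zz C ^ p * ww C ^ (m*(n+1))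
            + ((-1:ℂ))^(n+1) • (zz C ^ p * tt C ^ (m*(n+1))) := by
          unfold Fs; rw [mul_add, mul_smul_comm]
        rw [hFs, map_add, map_smul, hSp1' p _ (hmpos n), hSp2' p _ (hmpos n),
          lam_zpow_ims m lam i hm1 hlam hcop (n+1), lam_pow_ims m lam i hm1 hlam hcop (n+1),
          smul_smul, hsqr n, one_smul, add_comm]
    have := hle hx
    rw [LinearMap.mem_eqLocus] at this
    exact this
  have hSmGood : ∀ x ∈ Good C m, Sm x = x := by
    intro x hx
    have hle : Good C m ≤ LinearMap.eqLocus Sm (LinearMap.id : A C →ₗ[ℂ] A C) := by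
      rw [Good]
      apply Submodule.span_le.mpr
      rintro y ⟨⟨p, s⟩, rfl⟩
      rw [SetLike.mem_coe, LinearMap.mem_eqLocus]
      show Sm (zz C ^ p * Fs C m s) = zz C ^ p * Fs C m s
      cases s with
      | zero => rw [Fs_zero_eq, mul_smul_comm, mul_one, map_smul, hSm3']
      | succ n =>
        have hFs : zz C ^ p * Fs C m (n+1) = zz C ^ p * ww C ^ (m*(n+1))
            + ((-1:ℂ))^(n+1) • (zz C ^ p * tt C ^ (m*(n+1))) := by
          unfold Fs; rw [mul_add, mul_smul_comm]
        rw [hFs, map_add, map_smul, hSm1' p _ (hmpos n), hSm2' p _ (hmpos n),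
          lam_zpow_ims m lam i hm1 hlam hcop (n+1), lam_pow_ims m lam i hm1 hlam hcop (n+1),
          smul_smul, hsqr n, one_smul, add_comm]
    have := hle hx
    rw [LinearMap.mem_eqLocus] at this
    exact this
  ext F
  simp only [Set.mem_setOf_eq, SetLike.mem_coe]
  rw [husq, hgg]
  constructor
  · rintro ⟨hτF, hSpF, hSmF⟩
    -- Step A : F is in the span of even monomials
    have hFsp : F ∈ SP C := SP_top C hCne F
    rw [SP, Submodule.span_union] at hFsp
    obtain ⟨Fe, hFe, Fo, hFo, hFeo⟩ := Submodule.mem_sup.mp hFsp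
    have hτFe : τ Fe = Fe := by
      have hle : Submodule.span ℂ (Set.range (ee C)) ≤
          LinearMap.eqLocus τ.toLinearMap (LinearMap.id : A C →ₗ[ℂ] A C) := by
        apply Submodule.span_le.mpr
        rintro y ⟨j, rfl⟩
        rw [SetLike.mem_coe, LinearMap.mem_eqLocus]
        exact tau_ee C τ hτu hτv j
      have := hle hFe
      rw [LinearMap.mem_eqLocus] at this
      exact this
    have hτFo : τ Fo = -Fo := by
      have hle : Submodule.span ℂ (Set.range (oo C)) ≤
          LinearMap.eqLocus τ.toLinearMap (-(LinearMap.id : A C →ₗ[ℂ] A C)) := by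
        apply Submodule.span_le.mpr
        rintro y ⟨⟨b, j⟩, rfl⟩
        rw [SetLike.mem_coe, LinearMap.mem_eqLocus]
        show τ (oo C (b, j)) = -(oo C (b, j))
        exact tau_oo C τ hτu hτv b j
      have := hle hFo
      rw [LinearMap.mem_eqLocus] at this
      exact this
    have hFo0 : Fo = 0 := by
      have h1 : Fe - Fo = Fe + Fo := by
        calc Fe - Fo = τ F := by rw [← hFeo, map_add, hτFe, hτFo, sub_eq_add_neg]
          _ = F := hτF
          _ = Fe + Fo := hFeo.symm
      have h2 : -Fo = Fo := by
        have := h1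
        rw [sub_eq_add_neg] at this
        exact add_left_cancel this
      have h3 : (2:ℂ) • Fo = 0 := by
        rw [two_smul]
        nth_rewrite 1 [← h2]
        exact neg_add_cancel Fo
      rcases smul_eq_zero.mp h3 with h | h
      · norm_num at h
      · exact h
    have hFee : F ∈ Submodule.span ℂ (Set.range (ee C)) := by
      rw [← hFeo, hFo0, add_zero]; exact hFe
    -- Step B : only q ≡ 0 mod m survives
    obtain ⟨l, hl⟩ := Finsupp.mem_span_range_iff_exists_finsupp.mp hFee
    have hsum : ∑ j ∈ l.support, l j • ee C j = F := hl
    set dfac : eeIdx → ℂ := fun j =>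
      Sum.elim (fun pq : ℕ × ℕ => lam ^ (i * pq.2) * lam ^ (i * pq.2))
        (fun pq : ℕ × ℕ => lam ^ (-((i * (pq.2+1) : ℕ) : ℤ)) *
          lam ^ (-((i * (pq.2+1) : ℕ) : ℤ))) j with hdfac
    have hSpSm_ee : ∀ j, Sp (Sm (ee C j)) = dfac j • ee C j := by
      rintro (⟨p, q⟩ | ⟨p, q⟩)
      · cases q with
        | zero =>
          show Sp (Sm (zz C ^ p * ww C ^ 0)) = (lam ^ (i*0) * lam ^ (i*0)) • (zz C ^ p * ww C ^ 0)
          rw [pow_zero, mul_one, hSm3', hSp3', Nat.mul_zero, pow_zero, one_mul, one_smul]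
        | succ n =>
          show Sp (Sm (zz C ^ p * ww C ^ (n+1)))
              = (lam ^ (i*(n+1)) * lam ^ (i*(n+1))) • (zz C ^ p * ww C ^ (n+1))
          rw [hSm1' p (n+1) (by omega), map_smul, hSp2' p (n+1) (by omega), smul_smul]
      · show Sp (Sm (zz C ^ p * tt C ^ (q+1)))
            = (lam ^ (-((i * (q+1) : ℕ) : ℤ)) * lam ^ (-((i * (q+1) : ℕ) : ℤ))) •
              (zz C ^ p * tt C ^ (q+1))
        rw [hSm2' p (q+1) (by omega), map_smul, hSp1' p (q+1) (by omega), smul_smul]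
    have hfix : ∀ j ∈ l.support, l j * (dfac j - 1) = 0 := by
      have hz : ∑ j ∈ l.support, (l j * (dfac j - 1)) • ee C j = 0 := by
        have e1 : Sp (Sm F) = ∑ j ∈ l.support, (l j * dfac j) • ee C j := by
          rw [← hsum, map_sum, map_sum]
          refine Finset.sum_congr rfl fun j _ => ?_
          rw [map_smul, map_smul, hSpSm_ee j, smul_smul]
        have e2 : Sp (Sm F) = F := by rw [hSmF, hSpF]
        calc ∑ j ∈ l.support, (l j * (dfac j - 1)) • ee C j
            = (∑ j ∈ l.support, (l j * dfac j) • ee C j) - ∑ j ∈ l.support, l j • ee C j := by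
              rw [← Finset.sum_sub_distrib]
              refine Finset.sum_congr rfl fun j _ => ?_
              rw [show l j * (dfac j - 1) = l j * dfac j - l j from by ring,
                sub_smul (l j * dfac j) (l j) (ee C j)]
          _ = F - F := by rw [← e1, e2, hsum]
          _ = 0 := sub_self F
      exact linearIndependent_iff'.mp (ee_li C hCne) l.support _ hz
    have hF2 : F ∈ Submodule.span ℂ (Set.range fun j => ee C (emb2 m j)) := by
      rw [← hsum]
      refine Submodule.sum_mem _ fun j hj => ?_
      rcases eq_or_ne (l j) 0 with h0 | h0
      · rw [h0, zero_smul]; exact Submodule.zero_mem _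
      · refine Submodule.smul_mem _ _ (Submodule.subset_span ?_)
        have hd1 : dfac j = 1 := by
          rcases mul_eq_zero.mp (hfix j hj) with h | h
          · exact absurd h h0
          · exact sub_eq_zero.mp h
        rcases j with ⟨p, q⟩ | ⟨p, q⟩
        · have hmq : m ∣ q := (dfac_one_iff m lam i hm1 hlam hcop q).mp hd1
          obtain ⟨s, rfl⟩ := hmq
          exact ⟨Sum.inl (p, s), rfl⟩
        · have hmq : m ∣ (q+1) := (dfac_one_iff' m lam i hm1 hlam hcop (q+1)).mp hd1
          obtain ⟨s', hs'⟩ := hmq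
          cases s' with
          | zero => omega
          | succ t =>
            refine ⟨Sum.inr (p, t), ?_⟩
            show ee C (Sum.inr (p, m * t + (m-1))) = ee C (Sum.inr (p, q))
            rw [Nat.mul_succ] at hs'
            have harith : m * t + (m - 1) = q := by
              generalize m * t = c at hs' ⊢
              omega
            rw [harith]
    -- Step C : pairing and conclusion
    set w2 : eeIdx → A C := fun j => ee C (emb2 m j) with hw2
    have li2 : LinearIndependent ℂ w2 := (ee_li C hCne).comp (emb2 m) (emb2_inj m hm1)
    have heqm : ∀ n : ℕ, m*n + (m-1) + 1 = m*(n+1) := fun n => by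
      rw [Nat.mul_succ]; omega
    have hSp_w2 : ∀ j, Sp (w2 j) = sg j • w2 (TT j) := by
      rintro (⟨p, q⟩ | ⟨p, q⟩)
      · cases q with
        | zero =>
          show Sp (zz C ^ p * ww C ^ (m*0)) = (1:ℂ) • (zz C ^ p * ww C ^ (m*0))
          rw [Nat.mul_zero, pow_zero, mul_one, hSp3', one_smul]
        | succ n =>
          show Sp (zz C ^ p * ww C ^ (m*(n+1)))
              = ((-1:ℂ))^(n+1) • (zz C ^ p * tt C ^ (m*n + (m-1) + 1))
          rw [heqm n, hSp1' p _ (hmpos n), lam_zpow_ims m lam i hm1 hlam hcop (n+1)]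
      · show Sp (zz C ^ p * tt C ^ (m*q + (m-1) + 1))
            = ((-1:ℂ))^(q+1) • (zz C ^ p * ww C ^ (m*(q+1)))
        rw [heqm q, hSp2' p _ (hmpos q), lam_pow_ims m lam i hm1 hlam hcop (q+1)]
    have hpair : ∀ j, w2 j + sg j • w2 (TT j) ∈ Good C m := by
      rintro (⟨p, q⟩ | ⟨p, q⟩)
      · cases q with
        | zero =>
          show (zz C ^ p * ww C ^ (m*0)) + (1:ℂ) • (zz C ^ p * ww C ^ (m*0)) ∈ Good C m
          have hFs : zz C ^ p * Fs C m 0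
              = (zz C ^ p * ww C ^ (m*0)) + (1:ℂ) • (zz C ^ p * ww C ^ (m*0)) := by
            rw [Fs_zero_eq, Nat.mul_zero, pow_zero, mul_one, one_smul, mul_smul_comm,
              mul_one, two_smul]
          rw [← hFs]
          exact Submodule.subset_span ⟨(p, 0), rfl⟩
        | succ n =>
          show (zz C ^ p * ww C ^ (m*(n+1)))
              + ((-1:ℂ))^(n+1) • (zz C ^ p * tt C ^ (m*n + (m-1) + 1)) ∈ Good C m
          rw [heqm n]
          have hFs : zz C ^ p * Fs C m (n+1) = zz C ^ p * ww C ^ (m*(n+1))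
              + ((-1:ℂ))^(n+1) • (zz C ^ p * tt C ^ (m*(n+1))) := by
            unfold Fs; rw [mul_add, mul_smul_comm]
          rw [← hFs]
          exact Submodule.subset_span ⟨(p, n+1), rfl⟩
      · show (zz C ^ p * tt C ^ (m*q + (m-1) + 1))
            + ((-1:ℂ))^(q+1) • (zz C ^ p * ww C ^ (m*(q+1))) ∈ Good C m
        rw [heqm q]
        have hFs : ((-1:ℂ))^(q+1) • (zz C ^ p * Fs C m (q+1))
            = (zz C ^ p * tt C ^ (m*(q+1)))
              + ((-1:ℂ))^(q+1) • (zz C ^ p * ww C ^ (m*(q+1))) := by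
          unfold Fs
          rw [mul_add, mul_smul_comm, smul_add, smul_smul, hsqr q, one_smul, add_comm]
        rw [← hFs]
        exact Submodule.smul_mem _ _ (Submodule.subset_span ⟨(p, q+1), rfl⟩)
    obtain ⟨l2, hl2⟩ := Finsupp.mem_span_range_iff_exists_finsupp.mp hF2
    have hsum2 : ∑ j ∈ l2.support, l2 j • w2 j = F := hl2
    set s0 := l2.support with hs0
    set u0 := s0 ∪ Finset.image TT s0 with hu0
    have hTu0 : ∀ j ∈ u0, TT j ∈ u0 := by
      intro j hj
      rcases Finset.mem_union.mp hj with h | h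
      · exact Finset.mem_union_right _ (Finset.mem_image_of_mem TT h)
      · obtain ⟨k, hk, rfl⟩ := Finset.mem_image.mp h
        exact Finset.mem_union_left _ (by rw [TT_invol]; exact hk)
    set c1 : eeIdx → ℂ := fun k => if k ∈ s0 then l2 k else 0 with hc1
    have hFu : ∑ k ∈ u0, c1 k • w2 k = F := by
      rw [← hsum2]
      have h1 : ∑ k ∈ s0, c1 k • w2 k = ∑ k ∈ u0, c1 k • w2 k :=
        Finset.sum_subset Finset.subset_union_left
          (fun x _ hxs => by rw [hc1]; simp only [if_neg hxs, zero_smul])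
      rw [← h1]
      exact Finset.sum_congr rfl fun j hj => by rw [hc1]; simp only [if_pos hj]
    have hSpF2 : ∑ k ∈ u0, (c1 (TT k) * sg k) • w2 k = F := by
      have e1 : Sp F = ∑ j ∈ u0, (c1 j * sg j) • w2 (TT j) := by
        rw [← hFu, map_sum]
        exact Finset.sum_congr rfl fun j _ => by rw [map_smul, hSp_w2 j, smul_smul]
      have e2 : ∑ j ∈ u0, (c1 j * sg j) • w2 (TT j)
          = ∑ k ∈ u0, (c1 (TT k) * sg k) • w2 k := by
        refine Finset.sum_nbij' TT TT hTu0 hTu0 (fun a _ => TT_invol a) (fun a _ => TT_invol a)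
          (fun a _ => ?_)
        rw [TT_invol, sg_TT]
      rw [← e2, ← e1, hSpF]
    have hrel : ∀ k ∈ u0, c1 k - c1 (TT k) * sg k = 0 := by
      have hz : ∑ k ∈ u0, (c1 k - c1 (TT k) * sg k) • w2 k = 0 := by
        calc ∑ k ∈ u0, (c1 k - c1 (TT k) * sg k) • w2 k
            = (∑ k ∈ u0, c1 k • w2 k) - ∑ k ∈ u0, (c1 (TT k) * sg k) • w2 k := by
              rw [← Finset.sum_sub_distrib]
              exact Finset.sum_congr rfl fun k _ => by
                rw [sub_smul (c1 k) (c1 (TT k) * sg k) (w2 k)]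
          _ = F - F := by rw [hFu, hSpF2]
          _ = 0 := sub_self F
      exact linearIndependent_iff'.mp li2 u0 _ hz
    have h2F : (2:ℂ) • F = ∑ k ∈ u0, c1 k • (w2 k + sg k • w2 (TT k)) := by
      have eF2 : ∑ k ∈ u0, c1 (TT k) • w2 (TT k) = F := by
        rw [← hFu]
        refine Finset.sum_nbij' TT TT hTu0 hTu0 (fun a _ => TT_invol a) (fun a _ => TT_invol a)
          (fun a _ => ?_)
        rfl
      calc (2:ℂ) • F = F + F := two_smul ℂ F
        _ = (∑ k ∈ u0, c1 k • w2 k) + ∑ k ∈ u0, c1 (TT k) • w2 (TT k) := by rw [hFu, eF2]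
        _ = ∑ k ∈ u0, (c1 k • w2 k + c1 (TT k) • w2 (TT k)) := Finset.sum_add_distrib.symm
        _ = ∑ k ∈ u0, c1 k • (w2 k + sg k • w2 (TT k)) := by
            refine Finset.sum_congr rfl fun k hk => ?_
            rw [smul_add, smul_smul]
            have hk' : c1 (TT k) = c1 k * sg k := by
              have h := hrel (TT k) (hTu0 k hk)
              rw [TT_invol, sg_TT] at h
              have := sub_eq_zero.mp h
              -- this : c1 (TT k) = c1 k * sg k
              exact this
            rw [hk']
    have hFGood : F ∈ Good C m := by
      have h2 : (2:ℂ) • F ∈ Good C m := by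
        rw [h2F]
        exact Submodule.sum_mem _ fun k _ => Submodule.smul_mem _ _ (hpair k)
      have h4 : F = (2⁻¹:ℂ) • ((2:ℂ) • F) := by rw [smul_smul]; norm_num
      rw [h4]
      exact Submodule.smul_mem _ _ h2
    exact Good_le_adjoin C m hCne hFGood
  · intro hF
    have hGd : F ∈ Good C m := adjoin_le_Good C m hCne hF
    refine ⟨?_, hSpGood F hGd, hSmGood F hGd⟩
    have hle : Algebra.adjoin ℂ ({zz C, gG C m} : Set (A C)) ≤
        AlgHom.equalizer τ (AlgHom.id ℂ (A C)) := by
      apply Algebra.adjoin_le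
      rintro x (rfl | rfl)
      · rw [SetLike.mem_coe, AlgHom.mem_equalizer]
        exact tau_zz C τ hτu hτv
      · rw [SetLike.mem_coe, AlgHom.mem_equalizer]
        show τ (gG C m) = gG C m
        show τ (tt C ^ m - ww C ^ m) = tt C ^ m - ww C ^ m
        rw [map_sub, map_pow, map_pow, tau_tt C τ hτu hτv, tau_ww C τ hτu hτv]
    have := hle hF
    rw [AlgHom.mem_equalizer] at this
    exact this

end
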